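/- Let N ≥ 1 and let L be a positive operator on the N-partite Hilbert space H. Suppose the family of unit vectors a = (a_0, …, a_{N-1}) maximizes ⟨P(b), L P(b)⟩ over all families b of unit vectors, and set Ψ = L P(a). Define φ in the last factor EuclideanSpace ℂ (Fin (d (N-1))) by φ k = ⟨P(a)[N-1 ↦ e_k], Ψ⟩, i.e., φ is the contraction ⟨a₀,…,a_{N-2}, · |Ψ⟩. Then there exists ν ∈ ℂ with ν ≠ 0 such that ν • a_{N-1} = φ; in fact one may take ν = ⟨P(a), L P(a)⟩ > 0. (Theorem 2, Backward iteration: at a maximizer the last component is proportional to the contraction of Ψ against the remaining components.) -/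

import Mathlib

open scoped ComplexInnerProductSpace

/-- The product vector `P(a)` of a family of vectors, `P(a) i = ∏ j, a j (i j)`. -/
noncomputable def prodVec {N : ℕ} {d : Fin N → ℕ}
    (a : (j : Fin N) → EuclideanSpace ℂ (Fin (d j))) :
    EuclideanSpace ℂ ((j : Fin N) → Fin (d j)) :=
  WithLp.toLp 2 (fun i => ∏ j, a j (i j))

lemma prodVec_update_apply {N : ℕ} {d : Fin (N + 1) → ℕ}
    (a : (j : Fin (N + 1)) → EuclideanSpace ℂ (Fin (d j)))
    (x : EuclideanSpace ℂ (Fin (d (Fin.last N)))) (i : (j : Fin (N+1)) → Fin (d j)) :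
    prodVec (Function.update a (Fin.last N) x) i =
      (∏ j ∈ Finset.univ.erase (Fin.last N), a j (i j)) * x (i (Fin.last N)) := by
  unfold prodVec
  show (∏ j, Function.update a (Fin.last N) x j (i j)) = _
  rw [← Finset.prod_erase_mul _ _ (Finset.mem_univ (Fin.last N))]
  congr 1
  · exact Finset.prod_congr rfl fun j hj => by
      rw [Function.update_of_ne (Finset.ne_of_mem_erase hj)]
  · rw [Function.update_self]

/-- The partial product map as a linear map in the last slot. -/
noncomputable def prodLin {N : ℕ} {d : Fin (N + 1) → ℕ}
    (a : (j : Fin (N + 1)) → EuclideanSpace ℂ (Fin (d j))) :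
    EuclideanSpace ℂ (Fin (d (Fin.last N))) →ₗ[ℂ]
      EuclideanSpace ℂ ((j : Fin (N + 1)) → Fin (d j)) where
  toFun x := prodVec (Function.update a (Fin.last N) x)
  map_add' x y := by
    ext i
    simp only [prodVec_update_apply, PiLp.add_apply, mul_add]
  map_smul' c x := by
    ext i
    simp only [prodVec_update_apply, PiLp.smul_apply, smul_eq_mul, RingHom.id_apply]
    ring

/-- **Theorem 2 (Backward iteration).**  If the family of unit vectors `a` maximizes
`⟨P(b), L P(b)⟩` over all families of unit vectors for a positive operator `L` on the
`(N+1)`-partite space, `Ψ = L P(a)`, and `φ k = ⟨P(a)[last ↦ e_k], Ψ⟩` is the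
contraction `⟨a₀,…,a_{N-1}, ⋅ | Ψ⟩`, then there is `ν ≠ 0` with `ν • a_last = φ`;
in fact one may take `ν = ⟨P(a), L P(a)⟩ > 0`. -/
theorem backward_iteration {N : ℕ} {d : Fin (N + 1) → ℕ} (hd : ∀ j, 1 ≤ d j)
    (L : EuclideanSpace ℂ ((j : Fin (N + 1)) → Fin (d j)) →L[ℂ]
        EuclideanSpace ℂ ((j : Fin (N + 1)) → Fin (d j)))
    (hLsa : IsSelfAdjoint L)
    (hLpos : ∀ x : EuclideanSpace ℂ ((j : Fin (N + 1)) → Fin (d j)),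
      x ≠ 0 → 0 < (⟪x, L x⟫).re)
    (a : (j : Fin (N + 1)) → EuclideanSpace ℂ (Fin (d j)))
    (ha : ∀ j, ‖a j‖ = 1)
    (hmax : ∀ b : (j : Fin (N + 1)) → EuclideanSpace ℂ (Fin (d j)),
      (∀ j, ‖b j‖ = 1) →
      (⟪prodVec b, L (prodVec b)⟫).re ≤ (⟪prodVec a, L (prodVec a)⟫).re)
    (Ψ : EuclideanSpace ℂ ((j : Fin (N + 1)) → Fin (d j)))
    (hΨ : Ψ = L (prodVec a))
    (φ : EuclideanSpace ℂ (Fin (d (Fin.last N))))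
    (hφ : ∀ k : Fin (d (Fin.last N)),
      φ k = ⟪prodVec (Function.update a (Fin.last N) (EuclideanSpace.single k 1)), Ψ⟫) :
    (∃ ν : ℂ, ν ≠ 0 ∧ ν • a (Fin.last N) = φ) ∧
    (⟪prodVec a, L (prodVec a)⟫ • a (Fin.last N) = φ ∧
      0 < (⟪prodVec a, L (prodVec a)⟫).re) := by
  set A : EuclideanSpace ℂ (Fin (d (Fin.last N))) →L[ℂ]
      EuclideanSpace ℂ ((j : Fin (N + 1)) → Fin (d j)) :=
    (prodLin a).toContinuousLinearMap with hA
  have hAx : ∀ x, A x = prodVec (Function.update a (Fin.last N) x) := fun _ => rfl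
  have hAa : A (a (Fin.last N)) = prodVec a := by
    rw [hAx, Function.update_eq_self]
  set T := ContinuousLinearMap.adjoint A ∘L L ∘L A with hT
  have hTsa : IsSelfAdjoint T := hLsa.adjoint_conj A
  have hinner : ∀ x y, ⟪x, T y⟫ = ⟪A x, L (A y)⟫ := by
    intro x y
    simp [hT, ContinuousLinearMap.adjoint_inner_right]
  -- positivity of the diagonal value
  have hane : prodVec a ≠ 0 := by
    have hcoord : ∀ j, ∃ k, a j k ≠ 0 := by
      intro j
      by_contra h
      push_neg at h
      have h0 : a j = 0 := by
        ext k; simpa using h k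
      have h1 := ha j
      rw [h0] at h1
      simp at h1
    choose i hi using hcoord
    intro h
    have : prodVec a i = 0 := by rw [h]; rfl
    rw [prodVec] at this
    exact (Finset.prod_ne_zero_iff.2 fun j _ => hi j) (by simpa only [WithLp.ofLp_toLp] using this)
  have hpos : 0 < (⟪prodVec a, L (prodVec a)⟫).re := hLpos _ hane
  -- a_last is a maximizer of the Rayleigh quotient of T on the unit sphere
  have halast : ‖a (Fin.last N)‖ = 1 := ha _
  have hmaxT : IsMaxOn T.reApplyInnerSelf (Metric.sphere 0 ‖a (Fin.last N)‖)
      (a (Fin.last N)) := by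
    intro x hx
    have hx1 : ‖x‖ = 1 := by
      simpa [halast] using mem_sphere_zero_iff_norm.mp hx
    have hb : ∀ j, ‖Function.update a (Fin.last N) x j‖ = 1 := by
      intro j
      rcases eq_or_ne j (Fin.last N) with rfl | hj
      · rw [Function.update_self]; exact hx1
      · rw [Function.update_of_ne hj]; exact ha j
    have hre : ∀ y, T.reApplyInnerSelf y = (⟪A y, L (A y)⟫).re := by
      intro y
      rw [ContinuousLinearMap.reApplyInnerSelf_apply, ← hinner, ← inner_conj_symm]
      simp
      rw [← inner_conj_symm, Complex.conj_re]
    simp only [Set.mem_setOf_eq, hre, hAx, Function.update_eq_self]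
    exact hmax _ hb
  have halne : a (Fin.last N) ≠ 0 := by
    intro h; rw [h] at halast; simpa using halast
  have heig : T (a (Fin.last N)) =
      (↑(T.rayleighQuotient (a (Fin.last N))) : ℂ) • a (Fin.last N) :=
    hTsa.eq_smul_self_of_isLocalExtrOn (Or.inr hmaxT.localize)
  set μ : ℝ := T.rayleighQuotient (a (Fin.last N)) with hμ
  -- φ = T a_last
  have hφT : φ = T (a (Fin.last N)) := by
    ext k
    rw [hφ k, hΨ, ← hAx, ← hAa, ← hinner]
    rw [show (⟪EuclideanSpace.single k 1, T (a (Fin.last N))⟫)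
        = T (a (Fin.last N)) k from by
      rw [EuclideanSpace.inner_single_left]; simp]
  -- ν = ⟪P(a), L P(a)⟫ equals μ
  have hν : ⟪prodVec a, L (prodVec a)⟫ = (μ : ℂ) := by
    have h1 : ⟪prodVec a, L (prodVec a)⟫ = ⟪a (Fin.last N), T (a (Fin.last N))⟫ := by
      rw [hinner, hAa]
    rw [h1, heig, inner_smul_right, inner_self_eq_norm_sq_to_K, halast]
    push_cast; ring
  have hμpos : 0 < μ := by
    have := hpos
    rw [hν] at this
    simpa using this
  have hsmul : ⟪prodVec a, L (prodVec a)⟫ • a (Fin.last N) = φ := by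
    rw [hν, hφT, heig]
  refine ⟨⟨⟪prodVec a, L (prodVec a)⟫, ?_, hsmul⟩, hsmul, hpos⟩
  rw [hν]
  exact_mod_cast hμpos.ne'
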